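/- Directed chromatic index of the transitive tournament: Let n ≥ 1 and let G be the transitive tournament on Fin n, i.e., G i j iff i < j. Then the least m such that the edges (2-walks) of G can be colored by a set of m elements with the colors of (v_1, v_2) and (v_2, v_3) differing for every 3-walk (v_1, v_2, v_3), equals ⌈log₂ n⌉; equivalently, such an edge coloring with m colors exists if and only if n ≤ 2^m. -/

import Mathlib

/-- A `k`-walk in the digraph `G` is a function `w : Fin k → V` such that
consecutive vertices are joined by an edge of `G`. -/
def IsWalk {V : Type*} (G : V → V → Prop) {k : ℕ} (w : Fin k → V) : Prop :=
  ∀ i : ℕ, ∀ h : i + 1 < k, G (w ⟨i, Nat.lt_of_succ_lt h⟩) (w ⟨i + 1, h⟩)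

theorem IsWalk.walkPrefix {V : Type*} {G : V → V → Prop} {k : ℕ} {u : Fin (k + 1) → V}
    (hu : IsWalk G u) : IsWalk G (fun i : Fin k => u i.castSucc) := by
  intro i h
  exact hu i (by omega)

theorem IsWalk.walkSuffix {V : Type*} {G : V → V → Prop} {k : ℕ} {u : Fin (k + 1) → V}
    (hu : IsWalk G u) : IsWalk G (fun i : Fin k => u i.succ) := by
  intro i h
  exact hu (i + 1) (by omega)

/-- The `k`-walks of `G`, as a subtype. -/
def Walks {V : Type*} (G : V → V → Prop) (k : ℕ) : Type _ :=
  {w : Fin k → V // IsWalk G w}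

/-- A `P`-coloring of the `k`-walks of `G`: for every `(k+1)`-walk `u`,
the color of its prefix `k`-walk is not `≤` the color of its suffix `k`-walk. -/
def IsPColoring {V : Type*} {P : Type*} [Preorder P] (G : V → V → Prop) (k : ℕ)
    (c : Walks G k → P) : Prop :=
  ∀ u : Walks G (k + 1),
    ¬ c ⟨fun i => u.1 i.castSucc, u.2.walkPrefix⟩ ≤ c ⟨fun i => u.1 i.succ, u.2.walkSuffix⟩

/-- The edges of the transitive tournament on `Fin n` (with `i → j` iff `i < j`) can be
colored with `m` colors so that the two edges of any 3-walk get different colors. -/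
def TournamentEdgeColorable (n m : ℕ) : Prop :=
  ∃ d : {e : Fin n × Fin n // e.1 < e.2} → Fin m,
    ∀ w : Fin 3 → Fin n, ∀ hw : IsWalk (fun i j : Fin n => i < j) w,
      d ⟨(w ⟨0, by omega⟩, w ⟨1, by omega⟩), hw 0 (by omega)⟩ ≠
      d ⟨(w ⟨1, by omega⟩, w ⟨2, by omega⟩), hw 1 (by omega)⟩

private lemma testBit_log_self {x : ℕ} (hx : x ≠ 0) : Nat.testBit x (Nat.log 2 x) = true := by
  have h1 : 2 ^ Nat.log 2 x ≤ x := Nat.pow_log_le_self 2 hx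
  have h2 : x < 2 ^ (Nat.log 2 x + 1) := Nat.lt_pow_succ_log_self one_lt_two x
  rw [Nat.testBit_eq_decide_div_mod_eq]
  have hd : x / 2 ^ Nat.log 2 x = 1 := by
    apply Nat.div_eq_of_lt_le (by simpa using h1)
    rw [pow_succ] at h2
    omega
  simp [hd]

/-- If `a < b` then at the top differing bit, `a` has `0` and `b` has `1`. -/
private lemma topbit {a b : ℕ} (h : a < b) :
    Nat.testBit a (Nat.log 2 (a ^^^ b)) = false ∧
    Nat.testBit b (Nat.log 2 (a ^^^ b)) = true := by
  set x := a ^^^ b with hx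
  have hx0 : x ≠ 0 := by simpa [hx, xor_eq_zero_iff] using h.ne
  set t := Nat.log 2 x with ht
  have htop : Nat.testBit x t = true := testBit_log_self hx0
  have hup : ∀ c, t < c → Nat.testBit a c = Nat.testBit b c := by
    intro c hc
    have hf : Nat.testBit x c = false := by
      apply Nat.testBit_lt_two_pow
      calc x < 2 ^ (t + 1) := Nat.lt_pow_succ_log_self one_lt_two x
      _ ≤ 2 ^ c := Nat.pow_le_pow_right (by norm_num) hc
    rw [hx, Nat.testBit_xor] at hf
    cases ha : Nat.testBit a c <;> cases hb : Nat.testBit b c <;> simp_all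
  have hne : Nat.testBit a t ≠ Nat.testBit b t := by
    intro he
    rw [hx, Nat.testBit_xor, he] at htop
    simp at htop
  cases hb : Nat.testBit b t with
  | true =>
    refine ⟨?_, rfl⟩
    cases ha : Nat.testBit a t with
    | true => exact absurd (ha.trans hb.symm) hne
    | false => rfl
  | false =>
    exfalso
    have ha : Nat.testBit a t = true := by
      cases ha : Nat.testBit a t with
      | true => rfl
      | false => exact absurd (ha.trans hb.symm) hne
    exact absurd (Nat.lt_of_testBit t hb ha (fun j hj => (hup j hj).symm)) (by omega)

private lemma walk3 {n : ℕ} {i j k : Fin n} (hij : i < j) (hjk : j < k) :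
    IsWalk (fun a b : Fin n => a < b) ![i, j, k] := by
  intro t ht
  have h2 : t < 2 := by omega
  interval_cases t
  · exact hij
  · exact hjk

private lemma colorable_iff (n m : ℕ) : TournamentEdgeColorable n m ↔ n ≤ 2 ^ m := by
  constructor
  · rintro ⟨d, hd⟩
    set S : Fin n → Finset (Fin m) :=
      fun i => Finset.univ.filter (fun c => ∃ j : Fin n, ∃ h : i < j, d ⟨(i, j), h⟩ = c) with hS
    have key : ∀ a b : Fin n, ∀ hlt : a < b, S a ≠ S b := by
      intro a b hlt hab
      have hmem : d ⟨(a, b), hlt⟩ ∈ S a := by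
        simp only [hS, Finset.mem_filter, Finset.mem_univ, true_and]
        exact ⟨b, hlt, rfl⟩
      rw [hab] at hmem
      simp only [hS, Finset.mem_filter, Finset.mem_univ, true_and] at hmem
      obtain ⟨k, hbk, hdk⟩ := hmem
      exact hd ![a, b, k] (walk3 hlt hbk) hdk.symm
    have hinj : Function.Injective S := by
      intro a b hab
      by_contra hne
      rcases lt_or_gt_of_ne hne with h | h
      · exact key a b h hab
      · exact key b a h hab.symm
    calc n = Fintype.card (Fin n) := (Fintype.card_fin n).symm
    _ ≤ Fintype.card (Finset (Fin m)) := Fintype.card_le_of_injective S hinj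
    _ = 2 ^ m := by simp [Fintype.card_finset]
  · intro hnm
    have bound : ∀ e : {e : Fin n × Fin n // e.1 < e.2},
        Nat.log 2 (e.1.1.val ^^^ e.1.2.val) < m := by
      rintro ⟨⟨i, j⟩, hij⟩
      have hx0 : i.val ^^^ j.val ≠ 0 := by
        simp only [ne_eq, xor_eq_zero_iff]
        exact fun h => absurd (Fin.val_injective h) hij.ne
      exact Nat.log_lt_of_lt_pow hx0
        (Nat.xor_lt_two_pow (lt_of_lt_of_le i.isLt hnm) (lt_of_lt_of_le j.isLt hnm))
    refine ⟨fun e => ⟨Nat.log 2 (e.1.1.val ^^^ e.1.2.val), bound e⟩, ?_⟩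
    intro w hw heq
    set i := w ⟨0, by omega⟩
    set j := w ⟨1, by omega⟩
    set k := w ⟨2, by omega⟩
    have hij : i < j := hw 0 (by omega)
    have hjk : j < k := hw 1 (by omega)
    have h1 := (topbit (show i.val < j.val from hij)).2
    have h2 := (topbit (show j.val < k.val from hjk)).1
    have hlog : Nat.log 2 (i.val ^^^ j.val) = Nat.log 2 (j.val ^^^ k.val) :=
      congrArg Fin.val heq
    rw [hlog] at h1
    rw [h1] at h2
    simp at h2

theorem transitive_tournament_directed_chromatic_index (n : ℕ) (hn : 1 ≤ n) :
    sInf {m : ℕ | TournamentEdgeColorable n m} = Nat.clog 2 n ∧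
    (∀ m : ℕ, TournamentEdgeColorable n m ↔ n ≤ 2 ^ m) := by
  refine ⟨?_, colorable_iff n⟩
  have hset : {m : ℕ | TournamentEdgeColorable n m} = {m : ℕ | Nat.clog 2 n ≤ m} := by
    ext m
    rw [Set.mem_setOf_eq, Set.mem_setOf_eq, colorable_iff, ← Nat.clog_le_iff_le_pow one_lt_two]
  rw [hset]
  exact csInf_Ici
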